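/- Assume in addition that the scalars q₂†·p₁, q̃₂†·A⁻¹·p₁, q₂†·A⁻¹·p̃₁ and q̃₂†·A⁻²·p̃₁ are all nonzero. Then the rank-one parts G₂ and G̃₂ are completely determined by the vectors p₁, p̃₁, q₂†, q̃₂† via the explicit formulas G₂ = A · ((z₂ − z₁)·(q₂†·p₁)⁻¹ • (p₁·q₂†) + (z₁ − ζ₂)·(q₂†·A⁻¹·p̃₁)⁻¹ • ((A⁻¹·p̃₁)·q₂†)) and G̃₂ = A · ((z₂ − ζ₁)·(q̃₂†·A⁻¹·p₁)⁻¹ • ((A⁻¹·p₁)·q̃₂†) + (ζ₁ − ζ₂)·(q̃₂†·A⁻²·p̃₁)⁻¹ • ((A⁻²·p̃₁)·q̃₂†)). -/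

import Mathlib

open Matrix

section aux
variable {r : ℕ}

private lemma mulA (p : Matrix (Fin r) (Fin 1) ℂ) (M : Matrix (Fin 1) (Fin 1) ℂ) :
    p * M = (M 0 0) • p := by
  ext i j
  rw [Matrix.mul_apply, Fin.sum_univ_one]
  have hj : j = 0 := Subsingleton.elim _ _
  subst hj
  simp [mul_comm]

private lemma mulB (M : Matrix (Fin 1) (Fin 1) ℂ) (q : Matrix (Fin 1) (Fin r) ℂ) :
    M * q = (M 0 0) • q := by
  ext i j
  rw [Matrix.mul_apply, Fin.sum_univ_one]
  have hi : i = 0 := Subsingleton.elim _ _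
  subst hi
  simp

private lemma trace11 (p : Matrix (Fin r) (Fin 1) ℂ) (q : Matrix (Fin 1) (Fin r) ℂ)
    (M : Matrix (Fin r) (Fin r) ℂ) :
    (p * q * M).trace = (q * M * p) 0 0 := by
  rw [Matrix.mul_assoc, Matrix.trace_mul_comm, Matrix.trace_fin_one, Matrix.mul_assoc]

private lemma extract (p w : Matrix (Fin r) (Fin 1) ℂ) (u q : Matrix (Fin 1) (Fin r) ℂ)
    (hq : q ≠ 0) (h : p * u = w * q) : ∃ σ : ℂ, w = σ • p := by
  have hj : ∃ j, q 0 j ≠ 0 := by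
    by_contra hc
    push_neg at hc
    exact hq (by ext i j; simpa [Subsingleton.elim i (0 : Fin 1)] using hc j)
  obtain ⟨j, hj⟩ := hj
  refine ⟨u 0 j / q 0 j, ?_⟩
  ext i k
  have h' := congrArg (fun M => M i j) h
  simp only [Matrix.mul_apply, Fin.sum_univ_one] at h'
  have hk : k = 0 := Subsingleton.elim _ _
  subst hk
  simp only [Matrix.smul_apply, smul_eq_mul]
  rw [div_mul_eq_mul_div, eq_div_iff hj]
  linear_combination -h'

private lemma row_inv_ne (A : Matrix (Fin r) (Fin r) ℂ) (hA : IsUnit A.det)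
    (q : Matrix (Fin 1) (Fin r) ℂ) (hq : q ≠ 0) : q * A⁻¹ ≠ 0 := by
  intro h
  apply hq
  have h2 := congrArg (· * A) h
  simpa [Matrix.mul_assoc, Matrix.nonsing_inv_mul A hA] using h2

private lemma affine_extract (c₁ c₂ c₃ c₄ z₁ z₂ : ℂ)
    (X₁ X₂ X₃ Y₁ Y₂ Y₃ : Matrix (Fin r) (Fin r) ℂ)
    (key : ∀ z : ℂ, z ≠ c₁ → z ≠ c₂ → z ≠ c₃ → z ≠ c₄ →
      (z - z₁) • X₁ + (z - z₂) • X₂ + X₃ = (z - z₂) • Y₁ + (z - z₁) • Y₂ + Y₃)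
    (w : ℂ) :
    (w - z₁) • X₁ + (w - z₂) • X₂ + X₃ = (w - z₂) • Y₁ + (w - z₁) • Y₂ + Y₃ := by
  obtain ⟨a, ha, b, hb, hab⟩ :=
    ((Set.toFinite ({c₁, c₂, c₃, c₄} : Set ℂ)).infinite_compl).nontrivial
  simp only [Set.mem_compl_iff, Set.mem_insert_iff, Set.mem_singleton_iff, not_or] at ha hb
  obtain ⟨ha1, ha2, ha3, ha4⟩ := ha
  obtain ⟨hb1, hb2, hb3, hb4⟩ := hb
  have ka := key a ha1 ha2 ha3 ha4
  have kb := key b hb1 hb2 hb3 hb4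
  have E1 : ∀ i j, X₁ i j + X₂ i j = Y₂ i j + Y₁ i j := by
    intro i j
    have ka' := congrArg (fun M => M i j) ka
    have kb' := congrArg (fun M => M i j) kb
    simp only [Matrix.add_apply, Matrix.smul_apply, smul_eq_mul] at ka' kb'
    have h2 : (a - b) * (X₁ i j + X₂ i j) = (a - b) * (Y₂ i j + Y₁ i j) := by
      linear_combination ka' - kb'
    exact mul_left_cancel₀ (sub_ne_zero.mpr hab) h2
  ext i j
  have ka' := congrArg (fun M => M i j) ka
  have e1 := E1 i j
  simp only [Matrix.add_apply, Matrix.smul_apply, smul_eq_mul] at ka' ⊢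
  linear_combination ka' + (w - a) * e1

private lemma BC_one (A : Matrix (Fin r) (Fin r) ℂ) (hA : IsUnit A.det)
    (p : Matrix (Fin r) (Fin 1) ℂ) (q : Matrix (Fin 1) (Fin r) ℂ)
    (z₀ ζ₀ z : ℂ) (h1 : z ≠ z₀) (h2 : z ≠ ζ₀)
    (he : (q * A⁻¹ * p) 0 0 = z₀ - ζ₀) :
    (A + (z - z₀)⁻¹ • (p * q)) * (A⁻¹ - (z - ζ₀)⁻¹ • (A⁻¹ * (p * q) * A⁻¹)) = 1 ∧
    (A⁻¹ - (z - ζ₀)⁻¹ • (A⁻¹ * (p * q) * A⁻¹)) * (A + (z - z₀)⁻¹ • (p * q)) = 1 := by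
  have hAA : A * A⁻¹ = 1 := Matrix.mul_nonsing_inv A hA
  have hAA' : A⁻¹ * A = 1 := Matrix.nonsing_inv_mul A hA
  set c := (z - z₀)⁻¹ with hc
  set d := (z - ζ₀)⁻¹ with hd
  have e1 : z - z₀ ≠ 0 := sub_ne_zero.mpr h1
  have e2 : z - ζ₀ ≠ 0 := sub_ne_zero.mpr h2
  have hscal : c - d - c * d * (z₀ - ζ₀) = 0 := by
    rw [hc, hd]; field_simp; ring
  have hG : (p * q) * (A⁻¹ * (p * q)) = (z₀ - ζ₀) • (p * q) := by
    have h0 : q * (A⁻¹ * (p * q)) = (z₀ - ζ₀) • q := by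
      rw [← Matrix.mul_assoc q A⁻¹, ← Matrix.mul_assoc, mulB, he]
    rw [Matrix.mul_assoc p q, h0, Matrix.mul_smul]
  have h3 : A * (A⁻¹ * (p * q) * A⁻¹) = (p * q) * A⁻¹ := by
    rw [← Matrix.mul_assoc, ← Matrix.mul_assoc, hAA, Matrix.one_mul]
  have h4 : (p * q) * (A⁻¹ * (p * q) * A⁻¹) = (z₀ - ζ₀) • ((p * q) * A⁻¹) := by
    rw [← Matrix.mul_assoc, hG, Matrix.smul_mul]
  have h3' : (A⁻¹ * (p * q) * A⁻¹) * A = A⁻¹ * (p * q) := by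
    rw [Matrix.mul_assoc, hAA', Matrix.mul_one]
  have h4' : (A⁻¹ * (p * q) * A⁻¹) * (p * q) = (z₀ - ζ₀) • (A⁻¹ * (p * q)) := by
    rw [Matrix.mul_assoc, Matrix.mul_assoc, hG, Matrix.mul_smul]
  constructor
  · have expand : (A + c • (p * q)) * (A⁻¹ - d • (A⁻¹ * (p * q) * A⁻¹)) =
        1 + (c - d - c * d * (z₀ - ζ₀)) • ((p * q) * A⁻¹) := by
      simp only [mul_sub, add_mul, Matrix.smul_mul, Matrix.mul_smul, hAA, h3, h4, smul_smul]
      module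
    rw [expand, hscal, zero_smul, add_zero]
  · have expand : (A⁻¹ - d • (A⁻¹ * (p * q) * A⁻¹)) * (A + c • (p * q)) =
        1 + (c - d - c * d * (z₀ - ζ₀)) • (A⁻¹ * (p * q)) := by
      simp only [mul_add, sub_mul, Matrix.smul_mul, Matrix.mul_smul, hAA', h3', h4', smul_smul]
      module
    rw [expand, hscal, zero_smul, add_zero]

private lemma four_factor (B₁ C₁ B₂ C₂ Bt₁ Ct₁ Bt₂ Ct₂ : Matrix (Fin r) (Fin r) ℂ)
    (h11 : C₁ * B₁ = 1) (h22 : C₂ * B₂ = 1) (ht1 : Bt₁ * Ct₁ = 1) (ht2 : Bt₂ * Ct₂ = 1)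
    (h : B₂ * B₁ = Bt₁ * Bt₂) : C₁ * C₂ = Ct₂ * Ct₁ := by
  have inv1 : (C₁ * C₂) * (B₂ * B₁) = 1 := by
    rw [Matrix.mul_assoc C₁ C₂, ← Matrix.mul_assoc C₂ B₂ B₁, h22, Matrix.one_mul, h11]
  have inv2 : (Bt₁ * Bt₂) * (Ct₂ * Ct₁) = 1 := by
    rw [Matrix.mul_assoc Bt₁ Bt₂, ← Matrix.mul_assoc Bt₂ Ct₂ Ct₁, ht2, Matrix.one_mul, ht1]
  calc C₁ * C₂ = (C₁ * C₂) * ((Bt₁ * Bt₂) * (Ct₂ * Ct₁)) := by rw [inv2, Matrix.mul_one]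
  _ = (C₁ * C₂) * ((B₂ * B₁) * (Ct₂ * Ct₁)) := by rw [← h]
  _ = ((C₁ * C₂) * (B₂ * B₁)) * (Ct₂ * Ct₁) := by simp only [Matrix.mul_assoc]
  _ = Ct₂ * Ct₁ := by rw [inv1, Matrix.one_mul]

end aux

set_option maxHeartbeats 2000000 in
/-- The rank-one parts `G₂` and `G̃₂` are determined by `p₁, p̃₁, q₂†, q̃₂†`. -/
theorem refactorization_G2_formulas
    (r : ℕ) (hr : 1 ≤ r)
    (A : Matrix (Fin r) (Fin r) ℂ) (hA : IsUnit A.det)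
    (z₁ z₂ ζ₁ ζ₂ : ℂ)
    (h12 : z₁ ≠ z₂) (h1a : z₁ ≠ ζ₁) (h1b : z₁ ≠ ζ₂)
    (h2a : z₂ ≠ ζ₁) (h2b : z₂ ≠ ζ₂) (hab : ζ₁ ≠ ζ₂)
    (p₁ p₂ pt₁ pt₂ : Matrix (Fin r) (Fin 1) ℂ)
    (q₁ q₂ qt₁ qt₂ : Matrix (Fin 1) (Fin r) ℂ)
    (hp₁ : p₁ ≠ 0) (hp₂ : p₂ ≠ 0) (hpt₁ : pt₁ ≠ 0) (hpt₂ : pt₂ ≠ 0)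
    (hq₁ : q₁ ≠ 0) (hq₂ : q₂ ≠ 0) (hqt₁ : qt₁ ≠ 0) (hqt₂ : qt₂ ≠ 0)
    (hζ₁ : (p₁ * q₁ * A⁻¹).trace = z₁ - ζ₁)
    (hζt₁ : (pt₁ * qt₁ * A⁻¹).trace = z₁ - ζ₁)
    (hζ₂ : (p₂ * q₂ * A⁻¹).trace = z₂ - ζ₂)
    (hζt₂ : (pt₂ * qt₂ * A⁻¹).trace = z₂ - ζ₂)
    (hre : ∀ z : ℂ, z ≠ z₁ → z ≠ z₂ →
      (A + (z - z₂)⁻¹ • (p₂ * q₂)) * (A + (z - z₁)⁻¹ • (p₁ * q₁)) =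
      (A + (z - z₁)⁻¹ • (pt₁ * qt₁)) * (A + (z - z₂)⁻¹ • (pt₂ * qt₂)))
    (hs₁ : (q₂ * p₁) 0 0 ≠ 0)
    (hs₂ : (qt₂ * A⁻¹ * p₁) 0 0 ≠ 0)
    (hs₃ : (q₂ * A⁻¹ * pt₁) 0 0 ≠ 0)
    (hs₄ : (qt₂ * (A ^ 2)⁻¹ * pt₁) 0 0 ≠ 0) :
    p₂ * q₂ =
      A * (((z₂ - z₁) * ((q₂ * p₁) 0 0)⁻¹) • (p₁ * q₂)
        + ((z₁ - ζ₂) * ((q₂ * A⁻¹ * pt₁) 0 0)⁻¹) • ((A⁻¹ * pt₁) * q₂)) ∧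
    pt₂ * qt₂ =
      A * (((z₂ - ζ₁) * ((qt₂ * A⁻¹ * p₁) 0 0)⁻¹) • ((A⁻¹ * p₁) * qt₂)
        + ((ζ₁ - ζ₂) * ((qt₂ * (A ^ 2)⁻¹ * pt₁) 0 0)⁻¹) • (((A ^ 2)⁻¹ * pt₁) * qt₂)) := by
  have hAA : A * A⁻¹ = 1 := Matrix.mul_nonsing_inv A hA
  have hAA' : A⁻¹ * A = 1 := Matrix.nonsing_inv_mul A hA
  have he₁ : (q₁ * A⁻¹ * p₁) 0 0 = z₁ - ζ₁ := by rw [← trace11]; exact hζ₁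
  have he₂ : (q₂ * A⁻¹ * p₂) 0 0 = z₂ - ζ₂ := by rw [← trace11]; exact hζ₂
  have het₁ : (qt₁ * A⁻¹ * pt₁) 0 0 = z₁ - ζ₁ := by rw [← trace11]; exact hζt₁
  have het₂ : (qt₂ * A⁻¹ * pt₂) 0 0 = z₂ - ζ₂ := by rw [← trace11]; exact hζt₂
  -- Part 1 : cleared refactorization identity
  have key : ∀ z : ℂ, z ≠ z₁ → z ≠ z₂ → z ≠ z₁ → z ≠ z₂ →
      (z - z₁) • (p₂ * q₂ * A) + (z - z₂) • (A * (p₁ * q₁)) + (p₂ * q₂) * (p₁ * q₁) =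
      (z - z₂) • (pt₁ * qt₁ * A) + (z - z₁) • (A * (pt₂ * qt₂)) + (pt₁ * qt₁) * (pt₂ * qt₂) := by
    intro z hz1 hz2 _ _
    have h := hre z hz1 hz2
    have i1 : (z - z₁) * (z - z₁)⁻¹ = 1 := mul_inv_cancel₀ (sub_ne_zero.mpr hz1)
    have i2 : (z - z₂) * (z - z₂)⁻¹ = 1 := mul_inv_cancel₀ (sub_ne_zero.mpr hz2)
    simp only [add_mul, mul_add, Matrix.smul_mul, Matrix.mul_smul, smul_smul] at h
    ext i j
    have hij := congrArg (fun M => M i j) h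
    simp only [Matrix.add_apply, Matrix.smul_apply, smul_eq_mul] at hij
    simp only [Matrix.add_apply, Matrix.smul_apply, smul_eq_mul]
    linear_combination ((z - z₁) * (z - z₂)) * hij
      - ((z - z₂) * ((A * (p₁ * q₁)) i j - (pt₁ * qt₁ * A) i j)
          + (p₂ * q₂ * (p₁ * q₁)) i j - (pt₁ * qt₁ * (pt₂ * qt₂)) i j) * i1
      - ((z - z₁) * ((p₂ * q₂ * A) i j - (A * (pt₂ * qt₂)) i j)
          + (z - z₁) * (z - z₁)⁻¹ * ((p₂ * q₂ * (p₁ * q₁)) i j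
            - (pt₁ * qt₁ * (pt₂ * qt₂)) i j)) * i2
  have R1 := affine_extract z₁ z₂ z₁ z₂ z₁ z₂ _ _ _ _ _ _ key z₁
  simp only [sub_self, zero_smul, zero_add, add_zero] at R1
  have hL : (z₁ - z₂) • (A * (p₁ * q₁)) + (p₂ * q₂) * (p₁ * q₁)
      = ((z₁ - z₂) • (A * p₁) + ((q₂ * p₁) 0 0) • p₂) * q₁ := by
    rw [Matrix.add_mul, Matrix.smul_mul, Matrix.smul_mul, ← Matrix.mul_assoc A p₁ q₁,
        Matrix.mul_assoc p₂ q₂ (p₁ * q₁), ← Matrix.mul_assoc q₂ p₁ q₁, mulB,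
        Matrix.mul_smul]
  have hR : (z₁ - z₂) • (pt₁ * qt₁ * A) + (pt₁ * qt₁) * (pt₂ * qt₂)
      = pt₁ * ((z₁ - z₂) • (qt₁ * A) + ((qt₁ * pt₂) 0 0) • qt₂) := by
    rw [Matrix.mul_add, Matrix.mul_smul, Matrix.mul_smul, Matrix.mul_assoc pt₁ qt₁ A,
        Matrix.mul_assoc pt₁ qt₁ (pt₂ * qt₂), ← Matrix.mul_assoc qt₁ pt₂ qt₂, mulB,
        Matrix.mul_smul]
  obtain ⟨τ, hτ⟩ := extract pt₁ ((z₁ - z₂) • (A * p₁) + ((q₂ * p₁) 0 0) • p₂)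
    ((z₁ - z₂) • (qt₁ * A) + ((qt₁ * pt₂) 0 0) • qt₂) q₁ hq₁ (hR.symm.trans (R1.symm.trans hL))
  have hq2inv : (q₂ * A⁻¹) * (A * p₁) = q₂ * p₁ := by
    rw [← Matrix.mul_assoc, Matrix.mul_assoc q₂ A⁻¹ A, hAA', Matrix.mul_one]
  have hτs := congrArg (fun M => ((q₂ * A⁻¹) * M) 0 0) hτ
  simp only [Matrix.mul_add, Matrix.mul_smul, Matrix.add_apply, Matrix.smul_apply,
    smul_eq_mul, hq2inv] at hτs
  rw [show (q₂ * A⁻¹) * p₂ = q₂ * A⁻¹ * p₂ from rfl, he₂,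
      show (q₂ * A⁻¹) * pt₁ = q₂ * A⁻¹ * pt₁ from rfl] at hτs
  have j1 : (q₂ * p₁) 0 0 * ((q₂ * p₁) 0 0)⁻¹ = 1 := mul_inv_cancel₀ hs₁
  have j3 : (q₂ * A⁻¹ * pt₁) 0 0 * ((q₂ * A⁻¹ * pt₁) 0 0)⁻¹ = 1 := mul_inv_cancel₀ hs₃
  have hp2 : p₂ = ((z₂ - z₁) * ((q₂ * p₁) 0 0)⁻¹) • (A * p₁)
      + ((z₁ - ζ₂) * ((q₂ * A⁻¹ * pt₁) 0 0)⁻¹) • pt₁ := by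
    ext i j
    have h1 := congrArg (fun M => M i j) hτ
    simp only [Matrix.add_apply, Matrix.smul_apply, smul_eq_mul] at h1 ⊢
    linear_combination ((q₂ * p₁) 0 0)⁻¹ * h1
      - (((q₂ * p₁) 0 0)⁻¹ * ((q₂ * A⁻¹ * pt₁) 0 0)⁻¹ * pt₁ i j) * hτs
      + ((z₁ - ζ₂) * ((q₂ * A⁻¹ * pt₁) 0 0)⁻¹ * pt₁ i j - p₂ i j) * j1
      - (((q₂ * p₁) 0 0)⁻¹ * τ * pt₁ i j) * j3
  refine ⟨?_, ?_⟩
  · rw [Matrix.mul_add, Matrix.mul_smul, Matrix.mul_smul, ← Matrix.mul_assoc A p₁ q₂,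
        ← Matrix.mul_assoc A (A⁻¹ * pt₁) q₂, ← Matrix.mul_assoc A A⁻¹ pt₁, hAA, Matrix.one_mul,
        hp2, Matrix.add_mul, Matrix.smul_mul, Matrix.smul_mul]
  · -- Part 2 : inverse refactorization identity
    have key2 : ∀ z : ℂ, z ≠ ζ₁ → z ≠ ζ₂ → z ≠ z₁ → z ≠ z₂ →
        (z - ζ₁) • (-(A⁻¹ * (A⁻¹ * (p₂ * q₂) * A⁻¹)))
          + (z - ζ₂) • (-((A⁻¹ * (p₁ * q₁) * A⁻¹) * A⁻¹))
          + (A⁻¹ * (p₁ * q₁) * A⁻¹) * (A⁻¹ * (p₂ * q₂) * A⁻¹) =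
        (z - ζ₂) • (-(A⁻¹ * (A⁻¹ * (pt₁ * qt₁) * A⁻¹)))
          + (z - ζ₁) • (-((A⁻¹ * (pt₂ * qt₂) * A⁻¹) * A⁻¹))
          + (A⁻¹ * (pt₂ * qt₂) * A⁻¹) * (A⁻¹ * (pt₁ * qt₁) * A⁻¹) := by
      intro z k1 k2 k3 k4
      have i1 : (z - ζ₁) * (z - ζ₁)⁻¹ = 1 := mul_inv_cancel₀ (sub_ne_zero.mpr k1)
      have i2 : (z - ζ₂) * (z - ζ₂)⁻¹ = 1 := mul_inv_cancel₀ (sub_ne_zero.mpr k2)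
      obtain ⟨hB1C1, hC1B1⟩ := BC_one A hA p₁ q₁ z₁ ζ₁ z k3 k1 he₁
      obtain ⟨hB2C2, hC2B2⟩ := BC_one A hA p₂ q₂ z₂ ζ₂ z k4 k2 he₂
      obtain ⟨hBt1Ct1, hCt1Bt1⟩ := BC_one A hA pt₁ qt₁ z₁ ζ₁ z k3 k1 het₁
      obtain ⟨hBt2Ct2, hCt2Bt2⟩ := BC_one A hA pt₂ qt₂ z₂ ζ₂ z k4 k2 het₂
      have hCC := four_factor _ _ _ _ _ _ _ _ hC1B1 hC2B2 hBt1Ct1 hBt2Ct2 (hre z k3 k4)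
      simp only [sub_mul, mul_sub, Matrix.smul_mul, Matrix.mul_smul, smul_smul] at hCC
      ext i j
      have hij := congrArg (fun M => M i j) hCC
      simp only [Matrix.sub_apply, Matrix.add_apply, Matrix.smul_apply, smul_eq_mul] at hij
      simp only [Matrix.add_apply, Matrix.smul_apply, Matrix.neg_apply, smul_eq_mul]
      linear_combination ((z - ζ₁) * (z - ζ₂)) * hij
        - (-(z - ζ₂) * (((A⁻¹ * (p₁ * q₁) * A⁻¹) * A⁻¹) i j
              - (A⁻¹ * (A⁻¹ * (pt₁ * qt₁) * A⁻¹)) i j)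
            + ((A⁻¹ * (p₁ * q₁) * A⁻¹) * (A⁻¹ * (p₂ * q₂) * A⁻¹)) i j
            - ((A⁻¹ * (pt₂ * qt₂) * A⁻¹) * (A⁻¹ * (pt₁ * qt₁) * A⁻¹)) i j) * i1
        - (-(z - ζ₁) * ((A⁻¹ * (A⁻¹ * (p₂ * q₂) * A⁻¹)) i j
              - ((A⁻¹ * (pt₂ * qt₂) * A⁻¹) * A⁻¹) i j)
            + (z - ζ₁) * (z - ζ₁)⁻¹ * (((A⁻¹ * (p₁ * q₁) * A⁻¹) * (A⁻¹ * (p₂ * q₂) * A⁻¹)) i j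
              - ((A⁻¹ * (pt₂ * qt₂) * A⁻¹) * (A⁻¹ * (pt₁ * qt₁) * A⁻¹)) i j)) * i2
    have S1 := affine_extract ζ₁ ζ₂ z₁ z₂ ζ₁ ζ₂ _ _ _ _ _ _ key2 ζ₁
    simp only [sub_self, zero_smul, zero_add, add_zero] at S1
    have hH1 : A⁻¹ * (p₁ * q₁) * A⁻¹ = (A⁻¹ * p₁) * (q₁ * A⁻¹) := by
      rw [← Matrix.mul_assoc A⁻¹ p₁ q₁, Matrix.mul_assoc (A⁻¹ * p₁) q₁ A⁻¹]
    have hHt1 : A⁻¹ * (pt₁ * qt₁) * A⁻¹ = (A⁻¹ * pt₁) * (qt₁ * A⁻¹) := by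
      rw [← Matrix.mul_assoc A⁻¹ pt₁ qt₁, Matrix.mul_assoc (A⁻¹ * pt₁) qt₁ A⁻¹]
    have hHt2 : A⁻¹ * (pt₂ * qt₂) * A⁻¹ = (A⁻¹ * pt₂) * (qt₂ * A⁻¹) := by
      rw [← Matrix.mul_assoc A⁻¹ pt₂ qt₂, Matrix.mul_assoc (A⁻¹ * pt₂) qt₂ A⁻¹]
    have hL2 : (ζ₁ - ζ₂) • (-((A⁻¹ * (p₁ * q₁) * A⁻¹) * A⁻¹))
        + (A⁻¹ * (p₁ * q₁) * A⁻¹) * (A⁻¹ * (p₂ * q₂) * A⁻¹)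
        = (A⁻¹ * p₁) * ((ζ₂ - ζ₁) • ((q₁ * A⁻¹) * A⁻¹)
            + (q₁ * A⁻¹) * (A⁻¹ * (p₂ * q₂) * A⁻¹)) := by
      rw [Matrix.mul_add, Matrix.mul_smul, smul_neg, ← neg_smul, neg_sub, hH1,
          Matrix.mul_assoc (A⁻¹ * p₁) (q₁ * A⁻¹) A⁻¹,
          Matrix.mul_assoc (A⁻¹ * p₁) (q₁ * A⁻¹) (A⁻¹ * (p₂ * q₂) * A⁻¹)]
    have hR2 : (ζ₁ - ζ₂) • (-(A⁻¹ * (A⁻¹ * (pt₁ * qt₁) * A⁻¹)))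
        + (A⁻¹ * (pt₂ * qt₂) * A⁻¹) * (A⁻¹ * (pt₁ * qt₁) * A⁻¹)
        = ((ζ₂ - ζ₁) • (A⁻¹ * (A⁻¹ * pt₁))
            + (A⁻¹ * (pt₂ * qt₂) * A⁻¹) * (A⁻¹ * pt₁)) * (qt₁ * A⁻¹) := by
      rw [Matrix.add_mul, Matrix.smul_mul, smul_neg, ← neg_smul, neg_sub, hHt1,
          ← Matrix.mul_assoc A⁻¹ (A⁻¹ * pt₁) (qt₁ * A⁻¹),
          ← Matrix.mul_assoc (A⁻¹ * (pt₂ * qt₂) * A⁻¹) (A⁻¹ * pt₁) (qt₁ * A⁻¹)]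
    obtain ⟨σ, hσ⟩ := extract (A⁻¹ * p₁)
      ((ζ₂ - ζ₁) • (A⁻¹ * (A⁻¹ * pt₁)) + (A⁻¹ * (pt₂ * qt₂) * A⁻¹) * (A⁻¹ * pt₁))
      ((ζ₂ - ζ₁) • ((q₁ * A⁻¹) * A⁻¹) + (q₁ * A⁻¹) * (A⁻¹ * (p₂ * q₂) * A⁻¹))
      (qt₁ * A⁻¹) (row_inv_ne A hA qt₁ hqt₁) (hL2.symm.trans (S1.trans hR2))
    have hb : (qt₂ * A⁻¹) * (A⁻¹ * pt₁) = qt₂ * (A ^ 2)⁻¹ * pt₁ := by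
      rw [pow_two, Matrix.mul_inv_rev, ← Matrix.mul_assoc (qt₂ * A⁻¹) A⁻¹ pt₁,
          Matrix.mul_assoc qt₂ A⁻¹ A⁻¹]
    have hterm : (A⁻¹ * (pt₂ * qt₂) * A⁻¹) * (A⁻¹ * pt₁)
        = ((qt₂ * (A ^ 2)⁻¹ * pt₁) 0 0) • (A⁻¹ * pt₂) := by
      rw [hHt2, Matrix.mul_assoc (A⁻¹ * pt₂) (qt₂ * A⁻¹) (A⁻¹ * pt₁), hb, mulA]
    rw [hterm] at hσ
    have e1 : qt₂ * (A⁻¹ * (A⁻¹ * pt₁)) = qt₂ * (A ^ 2)⁻¹ * pt₁ := by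
      rw [← Matrix.mul_assoc qt₂ A⁻¹ (A⁻¹ * pt₁), hb]
    have e2 : qt₂ * (A⁻¹ * pt₂) = qt₂ * A⁻¹ * pt₂ := (Matrix.mul_assoc qt₂ A⁻¹ pt₂).symm
    have e3 : qt₂ * (A⁻¹ * p₁) = qt₂ * A⁻¹ * p₁ := (Matrix.mul_assoc qt₂ A⁻¹ p₁).symm
    have hσs := congrArg (fun M => (qt₂ * M) 0 0) hσ
    simp only [Matrix.mul_add, Matrix.mul_smul, Matrix.add_apply, Matrix.smul_apply,
      smul_eq_mul, e1, e2, e3, het₂] at hσs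
    have f1 : A * (A⁻¹ * (A⁻¹ * pt₁)) = A⁻¹ * pt₁ := by
      rw [← Matrix.mul_assoc A A⁻¹ (A⁻¹ * pt₁), hAA, Matrix.one_mul]
    have f2 : A * (A⁻¹ * pt₂) = pt₂ := by
      rw [← Matrix.mul_assoc A A⁻¹ pt₂, hAA, Matrix.one_mul]
    have f3 : A * (A⁻¹ * p₁) = p₁ := by
      rw [← Matrix.mul_assoc A A⁻¹ p₁, hAA, Matrix.one_mul]
    have hσA := congrArg (fun M => A * M) hσ
    simp only [Matrix.mul_add, Matrix.mul_smul, f1, f2, f3] at hσA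
    have j2 : (qt₂ * A⁻¹ * p₁) 0 0 * ((qt₂ * A⁻¹ * p₁) 0 0)⁻¹ = 1 := mul_inv_cancel₀ hs₂
    have j4 : (qt₂ * (A ^ 2)⁻¹ * pt₁) 0 0 * ((qt₂ * (A ^ 2)⁻¹ * pt₁) 0 0)⁻¹ = 1 :=
      mul_inv_cancel₀ hs₄
    have hpt2 : pt₂ = ((z₂ - ζ₁) * ((qt₂ * A⁻¹ * p₁) 0 0)⁻¹) • p₁
        + ((ζ₁ - ζ₂) * ((qt₂ * (A ^ 2)⁻¹ * pt₁) 0 0)⁻¹) • (A⁻¹ * pt₁) := by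
      ext i j
      have h1 := congrArg (fun M => M i j) hσA
      simp only [Matrix.add_apply, Matrix.smul_apply, smul_eq_mul] at h1 ⊢
      linear_combination ((qt₂ * (A ^ 2)⁻¹ * pt₁) 0 0)⁻¹ * h1
        - (((qt₂ * (A ^ 2)⁻¹ * pt₁) 0 0)⁻¹ * ((qt₂ * A⁻¹ * p₁) 0 0)⁻¹ * p₁ i j) * hσs
        + ((z₂ - ζ₁) * ((qt₂ * A⁻¹ * p₁) 0 0)⁻¹ * p₁ i j - pt₂ i j) * j4
        - (((qt₂ * (A ^ 2)⁻¹ * pt₁) 0 0)⁻¹ * σ * p₁ i j) * j2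
    have hA2 : A * ((A ^ 2)⁻¹ * pt₁) = A⁻¹ * pt₁ := by
      rw [pow_two, Matrix.mul_inv_rev, ← Matrix.mul_assoc A (A⁻¹ * A⁻¹) pt₁,
          ← Matrix.mul_assoc A A⁻¹ A⁻¹, hAA, Matrix.one_mul]
    rw [Matrix.mul_add, Matrix.mul_smul, Matrix.mul_smul,
        ← Matrix.mul_assoc A ((A ^ 2)⁻¹ * pt₁) qt₂, hA2,
        ← Matrix.mul_assoc A (A⁻¹ * p₁) qt₂, f3, hpt2, Matrix.add_mul,
        Matrix.smul_mul, Matrix.smul_mul]
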